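/- Suppose two continuous functions G₁, G₂ : [0,T]×ℝ^d×M₂(ℝ^d) → ℝ satisfy G₁(s,x,μ) = G₂(s,x,μ) for all s ∈ [0,T], all μ ∈ M₂(ℝ^d), and all x ∈ supp(μ). Then G₁ = G₂ everywhere on [0,T]×ℝ^d×M₂(ℝ^d). -/

import Mathlib

open MeasureTheory Filter Set

noncomputable section

/-- Euclidean space ℝ^d. -/
abbrev Ed (d : ℕ) := EuclideanSpace ℝ (Fin d)

/-- The space `M₂(ℝ^d)` of Borel probability measures on ℝ^d with finite second moment. -/
def M2 (d : ℕ) : Type :=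
  {μ : Measure (Ed d) // IsProbabilityMeasure μ ∧ ∫⁻ x, (‖x‖₊ : ENNReal) ^ 2 ∂μ < ⊤}

/-- The second moment `μ(|·|²)` of a measure in `M₂(ℝ^d)`. -/
def mom {d : ℕ} (μ : M2 d) : ℝ := ∫ x, ‖x‖ ^ 2 ∂μ.1

/-- The squared 2-Wasserstein distance, as the infimum of coupling costs. -/
def W2sq {d : ℕ} (μ₁ μ₂ : M2 d) : ℝ :=
  sInf {r | ∃ π : Measure (Ed d × Ed d), π.map Prod.fst = μ₁.1 ∧ π.map Prod.snd = μ₂.1 ∧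
    r = ∫ p, ‖p.1 - p.2‖ ^ 2 ∂π}

/-- The 2-Wasserstein metric `ρ`. -/
def W2 {d : ℕ} (μ₁ μ₂ : M2 d) : ℝ := Real.sqrt (W2sq μ₁ μ₂)

/-- The Dirac measure δ₀ as an element of `M₂(ℝ^d)`. -/
def dirac0 (d : ℕ) : M2 d :=
  ⟨Measure.dirac 0, ⟨inferInstance, by simp [MeasureTheory.lintegral_dirac]⟩⟩

open scoped ENNReal NNReal

/-- two continuous functions on `[0,T]×ℝ^d×M₂(ℝ^d)` that coincide for
`x ∈ supp(μ)` coincide everywhere. Continuity in the measure variable is with respect to the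
2-Wasserstein metric `ρ = W2`, expressed sequentially. -/
theorem equal_on_support_implies_equal (d : ℕ) (T : ℝ) (hT : 0 ≤ T)
    (G₁ G₂ : ℝ → Ed d → M2 d → ℝ)
    (hcont₁ : ∀ (s : ℝ) (x : Ed d) (μ : M2 d) (sn : ℕ → ℝ) (xn : ℕ → Ed d) (mn : ℕ → M2 d),
      Tendsto sn atTop (nhds s) → Tendsto xn atTop (nhds x) →
      Tendsto (fun n => W2 (mn n) μ) atTop (nhds 0) →
      Tendsto (fun n => G₁ (sn n) (xn n) (mn n)) atTop (nhds (G₁ s x μ)))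
    (hcont₂ : ∀ (s : ℝ) (x : Ed d) (μ : M2 d) (sn : ℕ → ℝ) (xn : ℕ → Ed d) (mn : ℕ → M2 d),
      Tendsto sn atTop (nhds s) → Tendsto xn atTop (nhds x) →
      Tendsto (fun n => W2 (mn n) μ) atTop (nhds 0) →
      Tendsto (fun n => G₂ (sn n) (xn n) (mn n)) atTop (nhds (G₂ s x μ)))
    (heq : ∀ s ∈ Set.Icc (0 : ℝ) T, ∀ (μ : M2 d) (x : Ed d),
      (∀ r : ℝ, 0 < r → 0 < μ.1 (Metric.ball x r)) → G₁ s x μ = G₂ s x μ) :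
    ∀ s ∈ Set.Icc (0 : ℝ) T, ∀ (x : Ed d) (μ : M2 d), G₁ s x μ = G₂ s x μ := by
  intro s hs x μ
  classical
  -- small weights
  set ε : ℕ → ℝ≥0∞ := fun n => ((n : ℝ≥0∞) + 1)⁻¹ with hε
  have hεle1 : ∀ n, ε n ≤ 1 := by
    intro n
    simp only [hε]
    rw [ENNReal.inv_le_one]
    exact le_add_self
  have hεne : ∀ n, ε n ≠ ⊤ := by
    intro n
    simp [hε]
  have hεpos : ∀ n, 0 < ε n := by
    intro n
    simp only [hε]
    exact ENNReal.inv_pos.2 (by simp)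
  have h1εne : ∀ n, (1 : ℝ≥0∞) - ε n ≠ ⊤ := fun n =>
    (tsub_le_self.trans_lt ENNReal.one_lt_top).ne
  have hεtoReal : ∀ n, (ε n).toReal = ((n : ℝ) + 1)⁻¹ := by
    intro n
    simp only [hε, ENNReal.toReal_inv]
    rw [ENNReal.toReal_add (ENNReal.natCast_ne_top n) ENNReal.one_ne_top]
    simp
  have hprobμ : IsProbabilityMeasure μ.1 := μ.2.1
  -- the perturbed measures
  set ν : ℕ → Measure (Ed d) := fun n => (1 - ε n) • μ.1 + ε n • Measure.dirac x with hν
  have hνprob : ∀ n, IsProbabilityMeasure (ν n) := by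
    intro n
    constructor
    simp only [hν, Measure.add_apply, Measure.smul_apply, smul_eq_mul,
      measure_univ, mul_one]
    exact tsub_add_cancel_of_le (hεle1 n)
  have hνmom : ∀ n, ∫⁻ y, (‖y‖₊ : ℝ≥0∞) ^ 2 ∂(ν n) < ⊤ := by
    intro n
    simp only [hν]
    rw [lintegral_add_measure, lintegral_smul_measure, lintegral_smul_measure,
      lintegral_dirac]
    exact ENNReal.add_lt_top.2 ⟨ENNReal.mul_lt_top (h1εne n).lt_top μ.2.2,
      ENNReal.mul_lt_top (hεne n).lt_top (ENNReal.pow_lt_top ENNReal.coe_lt_top)⟩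
  set mn : ℕ → M2 d := fun n => ⟨ν n, hνprob n, hνmom n⟩ with hmn
  -- integrability facts
  have hnormint : Integrable (fun y : Ed d => ‖y‖ ^ 2) μ.1 := by
    refine ⟨(continuous_norm.pow 2).aestronglyMeasurable, ?_⟩
    show (∫⁻ y, (‖‖y‖ ^ 2‖₊ : ℝ≥0∞) ∂μ.1) < ⊤
    have : ∀ y : Ed d, (‖‖y‖ ^ 2‖₊ : ℝ≥0∞) = (‖y‖₊ : ℝ≥0∞) ^ 2 := by
      intro y
      rw [nnnorm_pow, nnnorm_norm, ENNReal.coe_pow]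
    simp only [this]
    exact μ.2.2
  have hxint : Integrable (fun y : Ed d => ‖x - y‖ ^ 2) μ.1 := by
    have hg : Integrable (fun y : Ed d => 2 * ‖x‖ ^ 2 + 2 * ‖y‖ ^ 2) μ.1 :=
      (integrable_const _).add (hnormint.const_mul 2)
    refine hg.mono' ((continuous_const.sub continuous_id).norm.pow 2).aestronglyMeasurable ?_
    filter_upwards with y
    rw [Real.norm_eq_abs, abs_of_nonneg (by positivity)]
    have h1 : ‖x - y‖ ≤ ‖x‖ + ‖y‖ := norm_sub_le x y
    nlinarith [norm_nonneg (x - y), norm_nonneg x, norm_nonneg y,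
      mul_self_le_mul_self (norm_nonneg (x - y)) h1, sq_nonneg (‖x‖ - ‖y‖)]
  set C : ℝ := ∫ y, ‖x - y‖ ^ 2 ∂μ.1 with hC
  -- the coupling
  have hdiag : Measurable (fun y : Ed d => (y, y)) := measurable_id.prodMk measurable_id
  have hpair : Measurable (fun y : Ed d => (x, y)) := measurable_const.prodMk measurable_id
  set π : ℕ → Measure (Ed d × Ed d) := fun n =>
    (1 - ε n) • μ.1.map (fun y => (y, y)) + ε n • μ.1.map (fun y => (x, y)) with hπ
  have hfst : ∀ n, (π n).map Prod.fst = ν n := by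
    intro n
    simp only [hπ, hν]
    rw [Measure.map_add _ _ measurable_fst, Measure.map_smul, Measure.map_smul,
      Measure.map_map measurable_fst hdiag, Measure.map_map measurable_fst hpair,
      (show (Prod.fst ∘ fun y : Ed d => (y, y)) = id from rfl),
      (show (Prod.fst ∘ fun y : Ed d => (x, y)) = fun _ : Ed d => x from rfl),
      Measure.map_id, Measure.map_const, measure_univ, one_smul]
  have hsnd : ∀ n, (π n).map Prod.snd = μ.1 := by
    intro n
    simp only [hπ]
    rw [Measure.map_add _ _ measurable_snd, Measure.map_smul, Measure.map_smul,
      Measure.map_map measurable_snd hdiag, Measure.map_map measurable_snd hpair]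
    have h1 : (Prod.snd ∘ fun y : Ed d => (y, y)) = id := rfl
    have h2 : (Prod.snd ∘ fun y : Ed d => (x, y)) = id := rfl
    rw [h1, h2, Measure.map_id, ← add_smul, tsub_add_cancel_of_le (hεle1 n), one_smul]
  have hcostmeas : AEStronglyMeasurable (fun p : Ed d × Ed d => ‖p.1 - p.2‖ ^ 2)
      (μ.1.map (fun y => (y, y)) + μ.1.map (fun y => (x, y))) :=
    ((continuous_fst.sub continuous_snd).norm.pow 2).aestronglyMeasurable
  have hint1 : Integrable (fun p : Ed d × Ed d => ‖p.1 - p.2‖ ^ 2)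
      (μ.1.map (fun y : Ed d => (y, y))) := by
    rw [integrable_map_measure (hcostmeas.mono_measure (Measure.le_add_right le_rfl))
      hdiag.aemeasurable]
    have : ((fun p : Ed d × Ed d => ‖p.1 - p.2‖ ^ 2) ∘ fun y : Ed d => (y, y)) =
        fun _ : Ed d => (0 : ℝ) := by funext y; simp
    rw [this]
    exact integrable_const 0
  have hint2 : Integrable (fun p : Ed d × Ed d => ‖p.1 - p.2‖ ^ 2)
      (μ.1.map (fun y : Ed d => (x, y))) := by
    rw [integrable_map_measure (hcostmeas.mono_measure (Measure.le_add_left le_rfl))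
      hpair.aemeasurable]
    exact hxint
  have hcost : ∀ n, (∫ p, ‖p.1 - p.2‖ ^ 2 ∂(π n)) = (ε n).toReal * C := by
    intro n
    simp only [hπ]
    rw [integral_add_measure (hint1.smul_measure (h1εne n)) (hint2.smul_measure (hεne n)),
      integral_smul_measure, integral_smul_measure,
      integral_map hdiag.aemeasurable (hcostmeas.mono_measure (Measure.le_add_right le_rfl)),
      integral_map hpair.aemeasurable (hcostmeas.mono_measure (Measure.le_add_left le_rfl))]
    simp [hC, smul_eq_mul]
  -- bounds on W2sq
  have hbdd : ∀ n, ∀ r ∈ {r | ∃ π : Measure (Ed d × Ed d), π.map Prod.fst = (mn n).1 ∧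
      π.map Prod.snd = μ.1 ∧ r = ∫ p, ‖p.1 - p.2‖ ^ 2 ∂π}, (0:ℝ) ≤ r := by
    intro n r hr
    obtain ⟨π', _, _, hr⟩ := hr
    rw [hr]
    exact integral_nonneg fun p => by positivity
  have hW2sq_nonneg : ∀ n, 0 ≤ W2sq (mn n) μ := by
    intro n
    exact le_csInf ⟨_, ⟨π n, hfst n, hsnd n, rfl⟩⟩ (hbdd n)
  have hW2sq_le : ∀ n, W2sq (mn n) μ ≤ (ε n).toReal * C := by
    intro n
    exact csInf_le ⟨0, hbdd n⟩ ⟨π n, hfst n, hsnd n, (hcost n).symm⟩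
  -- W2 tends to 0
  have hεC : Tendsto (fun n : ℕ => (ε n).toReal * C) atTop (nhds 0) := by
    have h0 : Tendsto (fun n : ℕ => ((n : ℝ) + 1)⁻¹) atTop (nhds 0) :=
      tendsto_one_div_add_atTop_nhds_zero_nat.congr (by intro n; rw [one_div])
    simpa using (h0.mul_const C).congr (by intro n; rw [hεtoReal n])
  have hW2 : Tendsto (fun n => W2 (mn n) μ) atTop (nhds 0) := by
    have hsqrt : Tendsto (fun n : ℕ => Real.sqrt ((ε n).toReal * C)) atTop (nhds 0) := by
      have := (Real.continuous_sqrt.tendsto 0).comp hεC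
      rw [Real.sqrt_zero] at this
      exact this.congr fun n => rfl
    refine squeeze_zero (fun n => Real.sqrt_nonneg _) (fun n => ?_) hsqrt
    exact Real.sqrt_le_sqrt (hW2sq_le n)
  -- each mn has full mass around x
  have hballs : ∀ n, ∀ r : ℝ, 0 < r → 0 < (mn n).1 (Metric.ball x r) := by
    intro n r hr
    have hx : x ∈ Metric.ball x r := Metric.mem_ball_self hr
    have : (mn n).1 (Metric.ball x r) =
        (1 - ε n) * μ.1 (Metric.ball x r) + ε n * Measure.dirac x (Metric.ball x r) := by
      simp [hmn, hν, Measure.add_apply, Measure.smul_apply, smul_eq_mul]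
    rw [this, Measure.dirac_apply' _ Metric.isOpen_ball.measurableSet]
    simp only [Set.indicator_of_mem hx, Pi.one_apply, mul_one]
    exact lt_of_lt_of_le (hεpos n) le_add_self
  have heqn : ∀ n, G₁ s x (mn n) = G₂ s x (mn n) := fun n =>
    heq s hs (mn n) x (hballs n)
  -- pass to the limit
  have h1 := hcont₁ s x μ (fun _ => s) (fun _ => x) mn tendsto_const_nhds tendsto_const_nhds hW2
  have h2 := hcont₂ s x μ (fun _ => s) (fun _ => x) mn tendsto_const_nhds tendsto_const_nhds hW2
  exact tendsto_nhds_unique (h1.congr fun n => heqn n) h2
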